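/- Let c ∈ ℝ, ε > 0, α ≥ 0, and s ∈ ℂ with Re(s) > 0. The cubic polynomial P(λ) = s + cλ - αsλ² + ελ³ has exactly three roots (with multiplicity), exactly one of which has negative real part and exactly two of which have positive real part. -/

import Mathlib

open Polynomial Complex

open Real Filter Topology


lemma arg_eq_arctan' (v : ℂ) (hv : 0 < v.re) : v.arg = Real.arctan (v.im / v.re) := by
  have h1 : |v.arg| < π/2 := Complex.abs_arg_lt_pi_div_two_iff.mpr (Or.inl hv)
  rw [abs_lt] at h1
  rw [← Complex.tan_arg, Real.arctan_tan h1.1 h1.2]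

lemma exp_phi (v : ℂ) (hv : v.re ≠ 0) :
    Complex.exp ((((if v.re < 0 then π else 0) + Real.arctan (v.im / v.re) : ℝ) : ℂ) * I)
      = v / ((‖v‖ : ℝ) : ℂ) := by
  rcases hv.lt_or_gt with h | h
  · have h2 : (0:ℝ) < (-v).re := by simpa using h
    have key := Complex.norm_mul_exp_arg_mul_I (-v)
    rw [arg_eq_arctan' (-v) h2] at key
    have harct : (-v).im / (-v).re = v.im / v.re := by simp [neg_div_neg_eq]
    rw [harct] at key
    have habs : ((‖-v‖ : ℝ) : ℂ) ≠ 0 := by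
      simp only [norm_neg]
      exact_mod_cast (norm_ne_zero_iff.mpr (by rintro rfl; simp at h))
    rw [if_pos h, Complex.ofReal_add, add_mul, Complex.exp_add, Complex.exp_pi_mul_I]
    rw [norm_neg] at key habs
    rw [eq_div_iff habs]
    linear_combination -key
  · have key := Complex.norm_mul_exp_arg_mul_I v
    rw [arg_eq_arctan' v h] at key
    have habs : ((‖v‖ : ℝ) : ℂ) ≠ 0 := by
      exact_mod_cast (norm_ne_zero_iff.mpr (by rintro rfl; simp at h))
    rw [if_neg (not_lt.mpr h.le), zero_add, eq_div_iff habs]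
    linear_combination key

noncomputable def phi (r : ℂ) (y : ℝ) : ℝ :=
  (if 0 < r.re then π else 0) + Real.arctan ((y - r.im)/(-r.re))

lemma phi_cont (r : ℂ) : Continuous (phi r) := by
  unfold phi
  exact continuous_const.add
    (Real.continuous_arctan.comp ((continuous_id.sub continuous_const).div_const _))

lemma exp_phi_eq (r : ℂ) (hr : r.re ≠ 0) (y : ℝ) :
    Complex.exp ((phi r y : ℝ) * I)
      = ((y:ℂ)*I - r) / ((‖(y:ℂ)*I - r‖ : ℝ) : ℂ) := by
  have h1 : ((y:ℂ)*I - r).re = -r.re := by simp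
  have h2 : ((y:ℂ)*I - r).im = y - r.im := by simp
  have key := exp_phi ((y:ℂ)*I - r) (by rw [h1]; simpa using hr)
  rw [h1, h2] at key
  have : phi r y = (if -r.re < 0 then π else 0) + Real.arctan ((y - r.im)/(-r.re)) := by
    rw [phi]
    congr 1
    simp [neg_lt_zero]
  rw [this]
  exact key

lemma phi_top (r : ℂ) (hr : r.re ≠ 0) : Tendsto (phi r) atTop (𝓝 (π/2)) := by
  have hlin : Tendsto (fun y : ℝ => y - r.im) atTop atTop := by
    simpa [sub_eq_add_neg] using tendsto_atTop_add_const_right atTop (-r.im) tendsto_id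
  unfold phi
  rcases hr.lt_or_gt with h | h
  · rw [if_neg (not_lt.mpr h.le)]
    have h1 : Tendsto (fun y : ℝ => (y - r.im)/(-r.re)) atTop atTop :=
      (tendsto_div_const_atTop_of_pos (by linarith)).mpr hlin
    have h2 := (tendsto_nhds_of_tendsto_nhdsWithin Real.tendsto_arctan_atTop).comp h1
    simpa [Function.comp_def] using h2
  · rw [if_pos h]
    have h1 : Tendsto (fun y : ℝ => (y - r.im)/(-r.re)) atTop atBot :=
      (tendsto_div_const_atBot_of_neg (by linarith)).mpr hlin
    have h2 := (tendsto_nhds_of_tendsto_nhdsWithin Real.tendsto_arctan_atBot).comp h1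
    have h3 := (tendsto_const_nhds : Tendsto (fun _ : ℝ => π) atTop (𝓝 π)).add h2
    have : π + -(π/2) = π/2 := by ring
    rwa [this] at h3

lemma phi_bot (r : ℂ) (hr : r.re ≠ 0) :
    Tendsto (phi r) atBot (𝓝 (if 0 < r.re then 3*π/2 else -(π/2))) := by
  have hlin : Tendsto (fun y : ℝ => y - r.im) atBot atBot := by
    simpa [sub_eq_add_neg] using tendsto_atBot_add_const_right atBot (-r.im) tendsto_id
  unfold phi
  rcases hr.lt_or_gt with h | h
  · rw [if_neg (not_lt.mpr h.le), if_neg (not_lt.mpr h.le)]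
    have h1 : Tendsto (fun y : ℝ => (y - r.im)/(-r.re)) atBot atBot :=
      (tendsto_div_const_atBot_of_pos (by linarith)).mpr hlin
    have h2 := (tendsto_nhds_of_tendsto_nhdsWithin Real.tendsto_arctan_atBot).comp h1
    simpa [Function.comp_def] using h2
  · rw [if_pos h, if_pos h]
    have h1 : Tendsto (fun y : ℝ => (y - r.im)/(-r.re)) atBot atTop :=
      (tendsto_div_const_atTop_of_neg (by linarith)).mpr hlin
    have h2 := (tendsto_nhds_of_tendsto_nhdsWithin Real.tendsto_arctan_atTop).comp h1
    have h3 := (tendsto_const_nhds : Tendsto (fun _ : ℝ => π) atBot (𝓝 π)).add h2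
    have : π + π/2 = 3*π/2 := by ring
    rwa [this] at h3

lemma Qdeg (σ α : ℝ) (hσ : 0 < σ) (hα : 0 ≤ α) :
    (C (σ*α) * X^2 + C σ : ℝ[X]).degree ≤ 2 ∧ (C (σ*α) * X^2 + C σ : ℝ[X]) ≠ 0 ∧
    0 < (C (σ*α) * X^2 + C σ : ℝ[X]).leadingCoeff := by
  rcases eq_or_lt_of_le hα with h0 | h0
  · have : (C (σ*α) * X^2 + C σ : ℝ[X]) = C σ := by rw [← h0]; simp
    rw [this]
    refine ⟨by simpa using degree_C_le.trans (by norm_num), ?_, ?_⟩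
    · simpa using hσ.ne'
    · simpa [leadingCoeff_C] using hσ
  · have hne : σ*α ≠ 0 := by positivity
    have hdlt : (C σ : ℝ[X]).degree < (C (σ*α) * X^2 : ℝ[X]).degree := by
      rw [degree_C_mul_X_pow _ hne]
      exact degree_C_le.trans_lt (by norm_num)
    constructor
    · rw [degree_add_eq_left_of_degree_lt hdlt, degree_C_mul_X_pow _ hne]; rfl
    refine ⟨?_, ?_⟩
    · intro h
      have := degree_add_eq_left_of_degree_lt hdlt
      rw [h] at this
      rw [degree_C_mul_X_pow _ hne] at this
      simp at this
    · rw [leadingCoeff_add_of_degree_lt' hdlt]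
      rw [leadingCoeff_C_mul_X_pow]
      positivity

lemma ratio_top (σ τ c α ε : ℝ) (hσ : 0 < σ) (hα : 0 ≤ α) (hε : 0 < ε) :
    Tendsto (fun y : ℝ => (τ*(1+α*y^2) + c*y - ε*y^3)/(σ*(1+α*y^2))) atTop atBot := by
  obtain ⟨hQd, hQ0, hQl⟩ := Qdeg σ α hσ hα
  set Q : ℝ[X] := C (σ*α) * X^2 + C σ with hQ
  set P : ℝ[X] := C (-ε) * X^3 + C (τ*α) * X^2 + C c * X + C τ with hP
  have hPd : P.degree = 3 := degree_cubic (by simpa using hε.ne')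
  have hPl : P.leadingCoeff = -ε := leadingCoeff_cubic (by simpa using hε.ne')
  have := Polynomial.div_tendsto_atBot_of_degree_gt P Q (by rw [hPd]; exact hQd.trans_lt (by norm_num))
    hQ0 (by rw [hPl]; exact (div_nonpos_iff.mpr (Or.inr ⟨by linarith, hQl.le⟩)))
  refine this.congr (fun y => ?_)
  simp only [hP, hQ, eval_add, eval_mul, eval_pow, eval_C, eval_X]
  ring_nf

lemma ratio_bot (σ τ c α ε : ℝ) (hσ : 0 < σ) (hα : 0 ≤ α) (hε : 0 < ε) :
    Tendsto (fun y : ℝ => (τ*(1+α*y^2) + c*y - ε*y^3)/(σ*(1+α*y^2))) atBot atTop := by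
  obtain ⟨hQd, hQ0, hQl⟩ := Qdeg σ α hσ hα
  set Q : ℝ[X] := C (σ*α) * X^2 + C σ with hQ
  set P : ℝ[X] := C ε * X^3 + C (τ*α) * X^2 + C (-c) * X + C τ with hP
  have hPd : P.degree = 3 := degree_cubic (by simpa using hε.ne')
  have hPl : P.leadingCoeff = ε := leadingCoeff_cubic (by simpa using hε.ne')
  have h1 := Polynomial.div_tendsto_atTop_of_degree_gt P Q (by rw [hPd]; exact hQd.trans_lt (by norm_num))
    hQ0 (by rw [hPl]; positivity)
  have h2 : Tendsto (fun y : ℝ => -y) atBot atTop := tendsto_neg_atBot_atTop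
  have := h1.comp h2
  refine this.congr (fun y => ?_)
  simp only [Function.comp, hP, hQ, eval_add, eval_mul, eval_pow, eval_C, eval_X]
  ring_nf

lemma div_quad (x₁ x₂ x₃ e A B D : ℂ) (hx₁ : x₁ ≠ 0) (hx₂ : x₂ ≠ 0) (hx₃ : x₃ ≠ 0)
    (he : e ≠ 0) (hA : A ≠ 0) (hB : B ≠ 0) (hD : D ≠ 0) :
    (e * x₁ * x₂ * x₃) / (e * A * B * D) / (x₁ / A) / (x₂ / B) / (x₃ / D) = 1 := by
  have h : (e * x₁ * x₂ * x₃) / (e * A * B * D) / (x₁ / A) / (x₂ / B) / (x₃ / D)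
      = (e/e) * (x₁/x₁) * (x₂/x₂) * (x₃/x₃) * (A/A) * (B/B) * (D/D) := by
        simp only [div_eq_mul_inv, mul_inv, inv_inv]; ring
  rw [h, div_self he, div_self hx₁, div_self hx₂, div_self hx₃, div_self hA, div_self hB,
    div_self hD]
  norm_num

lemma key_count (σ τ c α ε : ℝ) (hσ : 0 < σ) (hα : 0 ≤ α) (hε : 0 < ε) (a b d : ℂ)
    (ha : a.re ≠ 0) (hb : b.re ≠ 0) (hd : d.re ≠ 0)
    (hre : ∀ y : ℝ, ((ε:ℂ) * ((y:ℂ)*I - a) * ((y:ℂ)*I - b) * ((y:ℂ)*I - d)).re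
        = σ*(1+α*y^2))
    (him : ∀ y : ℝ, ((ε:ℂ) * ((y:ℂ)*I - a) * ((y:ℂ)*I - b) * ((y:ℂ)*I - d)).im
        = τ*(1+α*y^2) + c*y - ε*y^3) :
    (if 0 < a.re then (-π:ℝ) else π) + (if 0 < b.re then (-π:ℝ) else π)
      + (if 0 < d.re then (-π:ℝ) else π) = -π := by
  set f : ℝ → ℂ := fun y => (ε:ℂ) * ((y:ℂ)*I - a) * ((y:ℂ)*I - b) * ((y:ℂ)*I - d) with hf
  have hfre : ∀ y, 0 < (f y).re := by
    intro y; rw [hf, hre]; positivity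
  set A : ℝ → ℝ := fun y => Real.arctan ((f y).im / (f y).re) with hA
  set g : ℝ → ℝ := fun y => A y - phi a y - phi b y - phi d y with hg
  -- pointwise : g y ∈ 2πℤ
  have hint : ∀ y : ℝ, ∃ n : ℤ, g y = n * (2*π) := by
    intro y
    have hva : ((y:ℂ)*I - a) ≠ 0 := by
      intro hh; apply ha
      have := congrArg Complex.re hh; simpa [neg_eq_zero] using this
    have hvb : ((y:ℂ)*I - b) ≠ 0 := by
      intro hh; apply hb
      have := congrArg Complex.re hh; simpa [neg_eq_zero] using this
    have hvd : ((y:ℂ)*I - d) ≠ 0 := by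
      intro hh; apply hd
      have := congrArg Complex.re hh; simpa [neg_eq_zero] using this
    have hfa0 : ‖(y:ℂ)*I - a‖ ≠ 0 := norm_ne_zero_iff.mpr hva
    have hfb0 : ‖(y:ℂ)*I - b‖ ≠ 0 := norm_ne_zero_iff.mpr hvb
    have hfd0 : ‖(y:ℂ)*I - d‖ ≠ 0 := norm_ne_zero_iff.mpr hvd
    have hfny : f y ≠ 0 := by
      intro hh; have := hfre y; rw [hh] at this; simp at this
    have hexpA : Complex.exp ((A y : ℝ) * I) = f y / ((‖f y‖ : ℝ) : ℂ) := by
      have key := exp_phi (f y) (hfre y).ne'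
      rw [if_neg (not_lt.mpr (hfre y).le), zero_add] at key
      exact key
    have habs : ((‖f y‖ : ℝ) : ℂ)
        = (ε:ℂ) * ((‖(y:ℂ)*I - a‖ : ℝ) : ℂ) * ((‖(y:ℂ)*I - b‖ : ℝ) : ℂ)
          * ((‖(y:ℂ)*I - d‖ : ℝ) : ℂ) := by
      rw [hf]
      simp only [norm_mul, Complex.norm_real, Real.norm_eq_abs, abs_of_pos hε]
      push_cast; ring
    have hE : Complex.exp ((g y : ℝ) * I) = 1 := by
      have hsplit : ((g y : ℝ) : ℂ) * I
          = (A y : ℝ) * I - (phi a y : ℝ) * I - (phi b y : ℝ) * I - (phi d y : ℝ) * I := by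
        rw [hg]; push_cast; ring
      rw [hsplit, Complex.exp_sub, Complex.exp_sub, Complex.exp_sub, hexpA,
        exp_phi_eq a ha y, exp_phi_eq b hb y, exp_phi_eq d hd y, habs]
      exact div_quad _ _ _ _ _ _ _ hva hvb hvd (by exact_mod_cast hε.ne')
        (by exact_mod_cast hfa0) (by exact_mod_cast hfb0) (by exact_mod_cast hfd0)
    obtain ⟨n, hn⟩ := Complex.exp_eq_one_iff.mp hE
    refine ⟨n, ?_⟩
    have hI : ((g y : ℝ) : ℂ) = n * (2*π) := by
      apply mul_right_cancel₀ Complex.I_ne_zero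
      rw [hn]; ring
    exact_mod_cast hI
  -- continuity of g
  have hAeq : A = fun y => Real.arctan ((τ*(1+α*y^2) + c*y - ε*y^3)/(σ*(1+α*y^2))) := by
    funext y
    simp only [hA, hf]
    rw [hre y, him y]
  have hratio_cont : Continuous fun y : ℝ => (τ*(1+α*y^2) + c*y - ε*y^3)/(σ*(1+α*y^2)) := by
    apply Continuous.div (by fun_prop) (by fun_prop)
    intro y; positivity
  have hAcont : Continuous A := by
    rw [hAeq]; exact Real.continuous_arctan.comp hratio_cont
  have hgcont : Continuous g := by
    rw [hg]
    exact ((hAcont.sub (phi_cont a)).sub (phi_cont b)).sub (phi_cont d)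
  -- g is constant
  have hconst : ∀ y : ℝ, g y = g 0 := by
    have hle : ∀ y₁ y₂ : ℝ, g y₁ ≤ g y₂ := by
      intro y₁ y₂
      by_contra hlt
      push_neg at hlt
      obtain ⟨n₁, hn₁⟩ := hint y₁
      obtain ⟨n₂, hn₂⟩ := hint y₂
      have hpi := Real.pi_pos
      have hnlt : n₂ < n₁ := by
        by_contra hn
        push_neg at hn
        have : (n₁:ℝ) ≤ n₂ := by exact_mod_cast hn
        nlinarith
      have hgap : g y₂ + 2*π ≤ g y₁ := by
        have : (n₂:ℝ) + 1 ≤ n₁ := by exact_mod_cast hnlt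
        nlinarith
      have hmem : g y₂ + π ∈ Set.uIcc (g y₁) (g y₂) := by
        rw [Set.uIcc_of_ge (by linarith)]
        constructor <;> [linarith; linarith]
      obtain ⟨y₃, _, hy₃⟩ := intermediate_value_uIcc (hgcont.continuousOn) hmem
      obtain ⟨n₃, hn₃⟩ := hint y₃
      have : (2*(n₃:ℝ)) * π = (2*(n₂:ℝ)+1) * π := by rw [hy₃] at hn₃; nlinarith
      have h2 : (2*(n₃:ℝ)) = 2*(n₂:ℝ)+1 := mul_right_cancel₀ hpi.ne' this
      have : 2*n₃ = 2*n₂ + 1 := by exact_mod_cast h2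
      omega
    intro y
    exact le_antisymm (hle y 0) (hle 0 y)
  -- limits
  have hAtop : Tendsto A atTop (𝓝 (-(π/2))) := by
    rw [hAeq]
    exact (tendsto_nhds_of_tendsto_nhdsWithin Real.tendsto_arctan_atBot).comp
      (ratio_top σ τ c α ε hσ hα hε)
  have hAbot : Tendsto A atBot (𝓝 (π/2)) := by
    rw [hAeq]
    exact (tendsto_nhds_of_tendsto_nhdsWithin Real.tendsto_arctan_atTop).comp
      (ratio_bot σ τ c α ε hσ hα hε)
  have hgtop : Tendsto g atTop (𝓝 (-(π/2) - π/2 - π/2 - π/2)) := by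
    rw [hg]
    exact ((hAtop.sub (phi_top a ha)).sub (phi_top b hb)).sub (phi_top d hd)
  have hgbot : Tendsto g atBot
      (𝓝 (π/2 - (if 0 < a.re then 3*π/2 else -(π/2)) - (if 0 < b.re then 3*π/2 else -(π/2))
        - (if 0 < d.re then 3*π/2 else -(π/2)))) := by
    rw [hg]
    exact ((hAbot.sub (phi_bot a ha)).sub (phi_bot b hb)).sub (phi_bot d hd)
  have hgc : g = fun _ => g 0 := funext hconst
  have hctop : Tendsto g atTop (𝓝 (g 0)) := by
    nth_rewrite 1 [hgc]; exact tendsto_const_nhds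
  have hcbot : Tendsto g atBot (𝓝 (g 0)) := by
    nth_rewrite 1 [hgc]; exact tendsto_const_nhds
  have h1 := tendsto_nhds_unique hctop hgtop
  have h2 := tendsto_nhds_unique hcbot hgbot
  have hpi := Real.pi_pos
  by_cases haa : 0 < a.re <;> by_cases hbb : 0 < b.re <;> by_cases hdd : 0 < d.re <;>
    simp only [haa, hbb, hdd, if_true, if_false, if_pos, if_neg, not_false_iff] at h1 h2 ⊢ <;>
    linarith

/-- The cubic `P(λ) = s + cλ - αsλ² + ελ³` (with `ε > 0`, `α ≥ 0`, `Re s > 0`) has exactly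
three roots with multiplicity, exactly one with negative real part and exactly two with
positive real part. -/
theorem stmt_1 (c α ε : ℝ) (hα : 0 ≤ α) (hε : 0 < ε) (s : ℂ) (hs : 0 < s.re) :
    let P : Polynomial ℂ := C s + C (c : ℂ) * X - C ((α : ℂ) * s) * X ^ 2 + C (ε : ℂ) * X ^ 3
    Multiset.card P.roots = 3 ∧
    Multiset.card (P.roots.filter (fun z => z.re < 0)) = 1 ∧
    Multiset.card (P.roots.filter (fun z => 0 < z.re)) = 2 := by
  intro P
  have hPdef : P = C s + C (c : ℂ) * X - C ((α : ℂ) * s) * X ^ 2 + C (ε : ℂ) * X ^ 3 := rfl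
  have hεc : (ε:ℂ) ≠ 0 := by exact_mod_cast hε.ne'
  have hP3 : P = C (ε:ℂ) * X^3 + C (-((α:ℂ)*s)) * X^2 + C (c:ℂ) * X + C s := by
    rw [hPdef]; simp only [map_neg]; ring
  have hdeg : P.natDegree = 3 := by rw [hP3]; exact natDegree_cubic hεc
  have hPne : P ≠ 0 := by intro h; rw [h] at hdeg; simp at hdeg
  have hsp : P.Splits := IsAlgClosed.splits P
  have hcard : Multiset.card P.roots = 3 := by
    rw [(splits_iff_card_roots).mp hsp, hdeg]
  obtain ⟨a, b, d, hM⟩ := Multiset.card_eq_three.mp hcard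
  have hlc : P.leadingCoeff = (ε:ℂ) := by rw [hP3]; exact leadingCoeff_cubic hεc
  have hfact : P = C (ε:ℂ) * ((X - C a) * (X - C b) * (X - C d)) := by
    have h := hsp.eq_prod_roots
    rw [hM, hlc] at h
    simpa [Multiset.insert_eq_cons, Multiset.map_cons, Multiset.map_singleton,
      Multiset.prod_cons, Multiset.prod_singleton, mul_assoc] using h
  have heval : ∀ y : ℝ, P.eval ((y:ℂ)*I)
      = (ε:ℂ) * ((y:ℂ)*I - a) * ((y:ℂ)*I - b) * ((y:ℂ)*I - d) := by
    intro y; rw [hfact]; simp only [eval_mul, eval_sub, eval_C, eval_X]; ring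
  have hy2 : ∀ y : ℝ, ((y:ℂ)*I)^2 = -(((y:ℂ))^2) := by
    intro y; rw [mul_pow, Complex.I_sq]; ring
  have hy3 : ∀ y : ℝ, ((y:ℂ)*I)^3 = -((y:ℂ)^3*I) := by
    intro y
    rw [mul_pow, show (I:ℂ)^3 = -I from by rw [pow_succ, Complex.I_sq]; ring]
    ring
  have hPe : ∀ y : ℝ, P.eval ((y:ℂ)*I)
      = s + (c:ℂ)*(y:ℂ)*I + (α:ℂ)*s*(y:ℂ)^2 - (ε:ℂ)*(y:ℂ)^3*I := by
    intro y
    rw [hPdef]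
    simp only [eval_add, eval_sub, eval_mul, eval_pow, eval_C, eval_X, hy2 y, hy3 y]
    ring
  have hre' : ∀ y : ℝ, (P.eval ((y:ℂ)*I)).re = s.re * (1 + α*y^2) := by
    intro y
    rw [hPe y]
    simp [Complex.add_re, Complex.sub_re, Complex.mul_re, Complex.mul_im,
      Complex.ofReal_re, Complex.ofReal_im, Complex.I_re, Complex.I_im, ← Complex.ofReal_pow]
    ring
  have him' : ∀ y : ℝ, (P.eval ((y:ℂ)*I)).im = s.im * (1 + α*y^2) + c*y - ε*y^3 := by
    intro y
    rw [hPe y]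
    simp [Complex.add_im, Complex.sub_im, Complex.mul_re, Complex.mul_im,
      Complex.ofReal_re, Complex.ofReal_im, Complex.I_re, Complex.I_im, ← Complex.ofReal_pow]
    ring
  have hax : ∀ r ∈ P.roots, r.re ≠ 0 := by
    intro r hr h0
    have hroot : P.eval r = 0 := (Polynomial.mem_roots hPne).mp hr
    have hr' : r = ((r.im : ℝ):ℂ) * I := by
      apply Complex.ext <;> simp [h0]
    rw [hr'] at hroot
    have h2 := hre' r.im
    rw [hroot] at h2
    simp only [Complex.zero_re] at h2
    nlinarith [mul_nonneg hα (sq_nonneg r.im)]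
  have ha : a.re ≠ 0 := hax a (by rw [hM]; simp)
  have hb : b.re ≠ 0 := hax b (by rw [hM]; simp)
  have hd : d.re ≠ 0 := hax d (by rw [hM]; simp)
  have hre : ∀ y : ℝ, ((ε:ℂ) * ((y:ℂ)*I - a) * ((y:ℂ)*I - b) * ((y:ℂ)*I - d)).re
      = s.re*(1+α*y^2) := fun y => by rw [← heval y]; exact hre' y
  have him : ∀ y : ℝ, ((ε:ℂ) * ((y:ℂ)*I - a) * ((y:ℂ)*I - b) * ((y:ℂ)*I - d)).im
      = s.im*(1+α*y^2) + c*y - ε*y^3 := fun y => by rw [← heval y]; exact him' y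
  have key := key_count s.re s.im c α ε hs hα hε a b d ha hb hd hre him
  have hpi := Real.pi_pos
  have hcount : (a.re < 0 ∧ 0 < b.re ∧ 0 < d.re) ∨ (0 < a.re ∧ b.re < 0 ∧ 0 < d.re)
      ∨ (0 < a.re ∧ 0 < b.re ∧ d.re < 0) := by
    rcases ha.lt_or_gt with haa | haa <;> rcases hb.lt_or_gt with hbb | hbb <;>
      rcases hd.lt_or_gt with hdd | hdd
    · rw [if_neg (asymm haa), if_neg (asymm hbb), if_neg (asymm hdd)] at key; exfalso; linarith
    · rw [if_neg (asymm haa), if_neg (asymm hbb), if_pos hdd] at key; exfalso; linarith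
    · rw [if_neg (asymm haa), if_pos hbb, if_neg (asymm hdd)] at key; exfalso; linarith
    · exact Or.inl ⟨haa, hbb, hdd⟩
    · rw [if_pos haa, if_neg (asymm hbb), if_neg (asymm hdd)] at key; exfalso; linarith
    · exact Or.inr (Or.inl ⟨haa, hbb, hdd⟩)
    · exact Or.inr (Or.inr ⟨haa, hbb, hdd⟩)
    · rw [if_pos haa, if_pos hbb, if_pos hdd] at key; exfalso; linarith
  refine ⟨hcard, ?_, ?_⟩ <;>
    rcases hcount with ⟨h1, h2, h3⟩ | ⟨h1, h2, h3⟩ | ⟨h1, h2, h3⟩ <;>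
    simp [hM, Multiset.insert_eq_cons, Multiset.filter_cons, Multiset.filter_singleton,
      h1, h2, h3, asymm h1, asymm h2, asymm h3]
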